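/- Let G be a connected graph with spanning tree T and minimum cut value k, and let t, t' be orthogonal tree edges (neither lies on the root-to-leaf path of the other) such that {t,t'} is a minimum 2-respecting cut, i.e., Cut(t,t') = k. Then there exists an edge of G with one endpoint in the subtree T_t below t and the other endpoint in the subtree T_{t'} below t'. -/
import Mathlib


/-- Let `t, t'` be orthogonal tree edges, with vertex-disjoint subtrees
`A = T_t` and `B = T_{t'}` below them (so every edge covering `t` has an endpoint in
`A`, and every edge covering `t'` has an endpoint in `B`). If `{t,t'}` is a minimum
2-respecting cut, i.e. `Cut(t,t') = k` where `k ≥ 1` is the minimum cut value (so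
also `Cov(t) ≥ k` and `Cov(t') ≥ k`), then some edge of the graph has one endpoint
in `T_t` and the other in `T_{t'}`. Edges are a finite type `E` with endpoint maps
`x, y`, and `Cut(t,t')` counts the edges covering exactly one of `t, t'`. -/
theorem stmt_8 {E V β : Type*} [Fintype E] (x y : E → V) (covers : E → β → Prop)
    (t t' : β) (A B : Set V) (hdisj : Disjoint A B) (k : ℕ) (hk : 1 ≤ k)
    (hA : ∀ e : E, covers e t → x e ∈ A ∨ y e ∈ A)
    (hB : ∀ e : E, covers e t' → x e ∈ B ∨ y e ∈ B)
    (hcovt : k ≤ ({e : E | covers e t}).ncard)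
    (hcovt' : k ≤ ({e : E | covers e t'}).ncard)
    (hcut : ({e : E | Xor' (covers e t) (covers e t')}).ncard = k) :
    ∃ e : E, (x e ∈ A ∧ y e ∈ B) ∨ (x e ∈ B ∧ y e ∈ A) := by
  have hboth : ∃ e : E, covers e t ∧ covers e t' := by
    by_contra hb
    push_neg at hb
    have hsub : {e : E | covers e t} ∪ {e : E | covers e t'} ⊆
        {e : E | Xor' (covers e t) (covers e t')} := by
      rintro e (he | he)
      · exact Or.inl ⟨he, hb e he⟩
      · exact Or.inr ⟨he, fun h => hb e h he⟩
    have hd : Disjoint {e : E | covers e t} {e : E | covers e t'} := by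
      rw [Set.disjoint_left]
      exact fun e he he' => hb e he he'
    have hu := Set.ncard_union_eq hd (Set.toFinite _) (Set.toFinite _)
    have hle := Set.ncard_le_ncard hsub (Set.toFinite _)
    omega
  obtain ⟨e, he, he'⟩ := hboth
  have hdA := Set.disjoint_left.mp hdisj
  rcases hA e he with hx | hy <;> rcases hB e he' with hx' | hy'
  · exact absurd hx' (hdA hx)
  · exact ⟨e, Or.inl ⟨hx, hy'⟩⟩
  · exact ⟨e, Or.inr ⟨hx', hy⟩⟩
  · exact absurd hy' (hdA hy)
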